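/- Weighted Sobolev bound: there is a universal constant C such that for every f ∈ H¹(ℝ) and every C¹ weight φ : ℝ → (0,∞) with φ' > 0, ‖f²√(φ')‖²_{L^∞} ≤ C‖f‖²_{L²}( ∫ (f')² φ' + ∫ f² (φ'')²/φ' ), where the right side is assumed finite. -/

import Mathlib

open MeasureTheory Filter

private lemma young_aux (a b l : ℝ) (hl : 0 < l) : 2*a*b ≤ l*a^2 + b^2/l := by
  have h : l*a^2 + b^2/l = (l^2*a^2 + b^2)/l := by field_simp
  rw [h, le_div_iff₀ hl]; nlinarith [sq_nonneg (l*a - b)]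


private lemma final_aux (G A S : ℝ) (hG : 0 ≤ G) (hA : 0 ≤ A) (hS : 0 ≤ S)
    (key : ∀ l : ℝ, 0 < l → G ≤ (5/4) * (l * A + S / l)) : G ^ 2 ≤ 8 * A * S := by
  rcases eq_or_lt_of_le hA with hA0 | hA0
  · have hg0 : G ≤ 0 := by
      by_contra hcon
      push_neg at hcon
      have hl : 0 < ((5/4) * S + 1) / G := by positivity
      have hk := key _ hl
      rw [← hA0] at hk
      have heq : (5/4 : ℝ) * (((5/4) * S + 1) / G * 0 + S / (((5/4) * S + 1) / G))
          = (5/4) * (S * G) / ((5/4) * S + 1) := by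
        rw [mul_zero, zero_add, div_div_eq_mul_div]
        ring
      rw [heq] at hk
      have hden : (0:ℝ) < (5/4) * S + 1 := by positivity
      rw [le_div_iff₀ hden] at hk
      nlinarith [mul_pos hcon hcon]
    have hG0 : G = 0 := le_antisymm hg0 hG
    rw [hG0, ← hA0]
    norm_num
  · rcases eq_or_lt_of_le hS with hS0 | hS0
    · have hg0 : G ≤ 0 := by
        by_contra hcon
        push_neg at hcon
        have hl : 0 < 2 * G / (5 * A) := by positivity
        have hk := key _ hl
        rw [← hS0] at hk
        have heq : (5/4 : ℝ) * (2 * G / (5 * A) * A + 0 / (2 * G / (5 * A))) = G / 2 := by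
          rw [zero_div, add_zero]
          field_simp
          ring
        rw [heq] at hk
        linarith
      have hG0 : G = 0 := le_antisymm hg0 hG
      rw [hG0, ← hS0]
      norm_num
    · set l := Real.sqrt (S / A) with hldef
      have hl : 0 < l := Real.sqrt_pos.mpr (div_pos hS0 hA0)
      have hl2 : l ^ 2 = S / A := Real.sq_sqrt (div_pos hS0 hA0).le
      have heq : S / l = l * A := by
        rw [eq_comm, eq_div_iff hl.ne', mul_comm (l * A) l, ← mul_assoc, ← sq, hl2]
        exact div_mul_cancel₀ S hA0.ne'
      have hk := key _ hl
      rw [heq] at hk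
      have hk' : G ≤ (5/2) * (l * A) := by linarith
      have h2 : G ^ 2 ≤ ((5/2) * (l * A)) ^ 2 := by nlinarith [hk', hG]
      have h4 : l ^ 2 * A ^ 2 = S * A := by
        rw [hl2]; field_simp
      have h3 : ((5/2) * (l * A)) ^ 2 = (25/4) * (S * A) := by
        rw [mul_pow, mul_pow, show (25/4 : ℝ) * (S * A) = 25/4 * (l ^ 2 * A ^ 2) by rw [h4]]
        ring
      nlinarith [mul_nonneg hS hA]

theorem stmt_17 :
    ∃ C > 0, ∀ (f φ : ℝ → ℝ), ContDiff ℝ 1 f → ContDiff ℝ 2 φ →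
      (∀ y, 0 < deriv φ y) →
      Integrable (fun x => (f x) ^ 2) →
      Integrable (fun x => (deriv f x) ^ 2) →
      Integrable (fun x => (deriv f x) ^ 2 * deriv φ x) →
      Integrable (fun x => (f x) ^ 2 * (deriv (deriv φ) x) ^ 2 / deriv φ x) →
      Tendsto (fun y => (f y) ^ 2 * Real.sqrt (deriv φ y)) atBot (nhds 0) →
      ∀ y : ℝ, ((f y) ^ 2 * Real.sqrt (deriv φ y)) ^ 2 ≤
        C * (∫ x, (f x) ^ 2) *
          ((∫ x, (deriv f x) ^ 2 * deriv φ x)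
            + ∫ x, (f x) ^ 2 * (deriv (deriv φ) x) ^ 2 / deriv φ x) := by
  refine ⟨8, by norm_num, ?_⟩
  intro f φ hf hφ hp hf2 hdf2 hI1 hI2 hlim y
  have h1 : ContDiff ℝ 1 (deriv φ) := by
    have h2 : ContDiff ℝ ((1:ℕ) + 1) φ := by norm_num at hφ ⊢; exact hφ
    exact (contDiff_succ_iff_deriv.mp h2).2.2
  set A := ∫ x, (f x) ^ 2 with hAdef
  set B := ∫ x, (deriv f x) ^ 2 * deriv φ x with hBdef
  set D := ∫ x, (f x) ^ 2 * (deriv (deriv φ) x) ^ 2 / deriv φ x with hDdef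
  have hA : 0 ≤ A := integral_nonneg fun x => sq_nonneg _
  have hB : 0 ≤ B := integral_nonneg fun x => mul_nonneg (sq_nonneg _) (hp x).le
  have hD : 0 ≤ D := integral_nonneg fun x =>
    div_nonneg (mul_nonneg (sq_nonneg _) (sq_nonneg _)) (hp x).le
  set g : ℝ → ℝ := fun y => (f y) ^ 2 * Real.sqrt (deriv φ y) with hgdef
  set g' : ℝ → ℝ := fun z => 2 * f z * deriv f z * Real.sqrt (deriv φ z)
    + f z ^ 2 * (deriv (deriv φ) z / (2 * Real.sqrt (deriv φ z))) with hg'def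
  -- basic continuity
  have cf : Continuous f := hf.continuous
  have cf' : Continuous (deriv f) := hf.continuous_deriv le_rfl
  have cp : Continuous (deriv φ) := hφ.continuous_deriv one_le_two
  have cq : Continuous (deriv (deriv φ)) := h1.continuous_deriv le_rfl
  have cs : Continuous (fun x => Real.sqrt (deriv φ x)) := Real.continuous_sqrt.comp cp
  have hs : ∀ x, 0 < Real.sqrt (deriv φ x) := fun x => Real.sqrt_pos.mpr (hp x)
  have hsq : ∀ x, Real.sqrt (deriv φ x) ^ 2 = deriv φ x := fun x => Real.sq_sqrt (hp x).le
  have cg' : Continuous g' := by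
    apply Continuous.add
    · exact (((continuous_const.mul cf).mul cf').mul cs)
    · exact (cf.pow 2).mul (cq.div (continuous_const.mul cs)
        (fun x => (by have := hs x; linarith : (0:ℝ) < 2 * Real.sqrt (deriv φ x)).ne'))
  -- derivative of g
  have hder : ∀ z, HasDerivAt g (g' z) z := by
    intro z
    have hdf : HasDerivAt f (deriv f z) z := (hf.differentiable one_ne_zero z).hasDerivAt
    have hd1 : HasDerivAt (fun z => f z ^ 2) (2 * f z ^ 1 * deriv f z) z := by
      exact_mod_cast hdf.pow 2
    have hdp : HasDerivAt (deriv φ) (deriv (deriv φ) z) z := (h1.differentiable one_ne_zero z).hasDerivAt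
    have hd2 : HasDerivAt (fun z => Real.sqrt (deriv φ z))
        (1 / (2 * Real.sqrt (deriv φ z)) * deriv (deriv φ) z) z :=
      (Real.hasDerivAt_sqrt (hp z).ne').comp z hdp
    have := hd1.mul hd2
    refine this.congr_deriv ?_
    show _ = 2 * f z * deriv f z * Real.sqrt (deriv φ z)
      + f z ^ 2 * (deriv (deriv φ) z / (2 * Real.sqrt (deriv φ z)))
    ring
  -- integrability of g'
  have intT1 : Integrable (fun z => 2 * f z * deriv f z * Real.sqrt (deriv φ z)) := by
    refine (hf2.add hI1).mono' ?_ (ae_of_all _ fun x => ?_)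
    · exact (((continuous_const.mul cf).mul cf').mul cs).aestronglyMeasurable
    · have hb : (deriv f x * Real.sqrt (deriv φ x)) ^ 2 = (deriv f x) ^ 2 * deriv φ x := by
        rw [mul_pow, hsq]
      have h2 := two_mul_le_add_sq |f x| |deriv f x * Real.sqrt (deriv φ x)|
      have he : ‖2 * f x * deriv f x * Real.sqrt (deriv φ x)‖
          = 2 * |f x| * |deriv f x * Real.sqrt (deriv φ x)| := by
        rw [Real.norm_eq_abs, show (2 : ℝ) * f x * deriv f x * Real.sqrt (deriv φ x)
          = 2 * (f x * (deriv f x * Real.sqrt (deriv φ x))) by ring, abs_mul, abs_mul, abs_two]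
        ring
      rw [he]
      calc 2 * |f x| * |deriv f x * Real.sqrt (deriv φ x)|
          ≤ |f x| ^ 2 + |deriv f x * Real.sqrt (deriv φ x)| ^ 2 := by nlinarith [h2]
        _ = f x ^ 2 + (deriv f x) ^ 2 * deriv φ x := by rw [sq_abs, sq_abs, hb]
  have intT2 : Integrable (fun z => f z ^ 2 *
      (deriv (deriv φ) z / (2 * Real.sqrt (deriv φ z)))) := by
    refine (hf2.add hI2).mono' ?_ (ae_of_all _ fun x => ?_)
    · exact ((cf.pow 2).mul (cq.div (continuous_const.mul cs)
        (fun x => (by have := hs x; linarith : (0:ℝ) < 2 * Real.sqrt (deriv φ x)).ne'))).aestronglyMeasurable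
    · simp only [Pi.add_apply]
      set s := Real.sqrt (deriv φ x) with hsdef
      set q := deriv (deriv φ) x with hqdef
      set t := |q| / s with htdef
      have hs' : 0 < s := hs x
      have ht0 : 0 ≤ t := div_nonneg (abs_nonneg _) hs'.le
      have ht2 : t ^ 2 = q ^ 2 / deriv φ x := by
        rw [htdef, div_pow, sq_abs, hsq x]
      have habs : |q| / (2 * s) = t / 2 := by
        rw [htdef, mul_comm, ← div_div]
      have he : ‖f x ^ 2 * (q / (2 * s))‖ = f x ^ 2 * (|q| / (2 * s)) := by
        rw [Real.norm_eq_abs, abs_mul, abs_div, abs_of_pos (by linarith : (0:ℝ) < 2 * s),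
          abs_pow, sq_abs]
      rw [he, habs]
      have hrw : f x ^ 2 * q ^ 2 / deriv φ x = f x ^ 2 * t ^ 2 := by
        rw [mul_div_assoc, ← ht2]
      rw [hrw]
      nlinarith [mul_nonneg (sq_nonneg (f x)) (sq_nonneg (t - 1)), sq_nonneg (f x),
        mul_nonneg (sq_nonneg (f x)) ht0]
  have intg' : Integrable g' := intT1.add intT2
  -- FTC
  have hgy : g y = ∫ x in Set.Iic y, g' x := by
    have := integral_Iic_of_hasDerivAt_of_tendsto' (a := y)
      (fun x _ => hder x) intg'.integrableOn hlim
    rw [this]; ring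
  -- the key bound for every l > 0
  have key : ∀ l : ℝ, 0 < l → g y ≤ (5/4) * (l * A + (B + D) / l) := by
    intro l hl
    set h : ℝ → ℝ := fun x => (5/4*l) * f x ^ 2 + (1/l) * ((deriv f x) ^ 2 * deriv φ x)
      + (1/(4*l)) * (f x ^ 2 * (deriv (deriv φ) x) ^ 2 / deriv φ x) with hhdef
    have inth : Integrable h := ((hf2.const_mul _).add (hI1.const_mul _)).add (hI2.const_mul _)
    have hpt : ∀ x, g' x ≤ h x := by
      intro x
      set s := Real.sqrt (deriv φ x) with hsdef
      set q := deriv (deriv φ) x with hqdef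
      set t := |q| / s with htdef
      have hs' : 0 < s := hs x
      have ht0 : 0 ≤ t := div_nonneg (abs_nonneg _) hs'.le
      have ht2 : t ^ 2 = q ^ 2 / deriv φ x := by
        rw [htdef, div_pow, sq_abs, hsq x]
      have habs : |q| / (2 * s) = t / 2 := by
        rw [htdef, mul_comm, ← div_div]
      -- claim 1
      have hc1 : 2 * f x * deriv f x * s
          ≤ l * f x ^ 2 + (1/l) * ((deriv f x) ^ 2 * deriv φ x) := by
        have := young_aux (f x) (deriv f x * s) l hl
        have hb : (deriv f x * s) ^ 2 = (deriv f x) ^ 2 * deriv φ x := by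
          rw [mul_pow, hsdef, hsq]
        calc 2 * f x * deriv f x * s = 2 * f x * (deriv f x * s) := by ring
          _ ≤ l * f x ^ 2 + (deriv f x * s) ^ 2 / l := this
          _ = l * f x ^ 2 + (1/l) * ((deriv f x) ^ 2 * deriv φ x) := by rw [hb]; ring
      -- claim 2
      have hc2 : f x ^ 2 * (q / (2 * s))
          ≤ (l/4) * f x ^ 2 + (1/(4*l)) * (f x ^ 2 * q ^ 2 / deriv φ x) := by
        have hstep : f x ^ 2 * (q / (2 * s)) ≤ f x ^ 2 * (t / 2) := by
          rw [← habs]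
          exact mul_le_mul_of_nonneg_left
            (div_le_div_of_nonneg_right (le_abs_self q) (by linarith : (0:ℝ) ≤ 2 * s))
            (sq_nonneg _)
        have hy2 : 2 * 1 * t ≤ l * 1 ^ 2 + t ^ 2 / l := young_aux 1 t l hl
        have hmul := mul_le_mul_of_nonneg_left hy2 (sq_nonneg (f x))
        have hrw : f x ^ 2 * q ^ 2 / deriv φ x = f x ^ 2 * t ^ 2 := by
          rw [mul_div_assoc, ← ht2]
        rw [hrw]
        have hfin : f x ^ 2 * (t / 2) ≤ (l/4) * f x ^ 2 + (1/(4*l)) * (f x ^ 2 * t ^ 2) := by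
          have e1 : f x ^ 2 * (2 * 1 * t) = 2 * (f x ^ 2 * t) := by ring
          have e2 : f x ^ 2 * (l * 1 ^ 2 + t ^ 2 / l) = l * f x ^ 2 + (f x ^ 2 * t ^ 2) / l := by
            ring
          rw [e1, e2] at hmul
          have h4l : (1:ℝ)/(4*l) * (f x ^ 2 * t ^ 2) = (f x ^ 2 * t ^ 2) / l / 4 := by
            ring
          linarith [hmul]
        exact le_trans hstep hfin
      calc g' x ≤ (l * f x ^ 2 + (1/l) * ((deriv f x) ^ 2 * deriv φ x))
            + ((l/4) * f x ^ 2 + (1/(4*l)) * (f x ^ 2 * q ^ 2 / deriv φ x)) :=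
          add_le_add hc1 hc2
        _ = h x := by simp only [hhdef]; ring
    have hnn : ∀ x, 0 ≤ h x := by
      intro x
      have t1 : 0 ≤ (5/4*l) * f x ^ 2 := mul_nonneg (by linarith) (sq_nonneg _)
      have t2 : 0 ≤ (1/l) * ((deriv f x) ^ 2 * deriv φ x) :=
        mul_nonneg (by positivity) (mul_nonneg (sq_nonneg _) (hp x).le)
      have t3 : 0 ≤ (1/(4*l)) * (f x ^ 2 * (deriv (deriv φ) x) ^ 2 / deriv φ x) :=
        mul_nonneg (by positivity)
          (div_nonneg (mul_nonneg (sq_nonneg _) (sq_nonneg _)) (hp x).le)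
      simp only [hhdef]
      linarith
    have step1 : g y ≤ ∫ x in Set.Iic y, h x := by
      rw [hgy]
      exact integral_mono intg'.integrableOn inth.integrableOn hpt
    have step2 : ∫ x in Set.Iic y, h x ≤ ∫ x, h x :=
      setIntegral_le_integral inth (ae_of_all _ hnn)
    have i1 : Integrable (fun x => (5/4*l) * f x ^ 2) := hf2.const_mul _
    have i2 : Integrable (fun x => (1/l) * ((deriv f x) ^ 2 * deriv φ x)) := hI1.const_mul _
    have i3 : Integrable (fun x => (1/(4*l)) * (f x ^ 2 * (deriv (deriv φ) x) ^ 2 / deriv φ x)) :=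
      hI2.const_mul _
    have i12 : Integrable (fun x => (5/4*l) * f x ^ 2
        + (1/l) * ((deriv f x) ^ 2 * deriv φ x)) := i1.add i2
    have step3 : ∫ x, h x = (5/4*l) * A + (1/l) * B + (1/(4*l)) * D := by
      rw [hhdef]
      rw [integral_add i12 i3, integral_add i1 i2,
        integral_const_mul, integral_const_mul, integral_const_mul]
    have step4 : (5/4*l) * A + (1/l) * B + (1/(4*l)) * D ≤ (5/4) * (l * A + (B + D) / l) := by
      have hil : 0 < 1/l := by positivity
      have e : (5/4 : ℝ) * (l * A + (B + D) / l) = (5/4*l) * A + (5/4) * ((1/l) * (B + D)) := by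
        field_simp
      rw [e, show (1:ℝ)/(4*l) = 1/4*(1/l) by ring]
      nlinarith [mul_nonneg hil.le hB, mul_nonneg hil.le hD]
    linarith [step1, step2, step3.le, step3.ge, step4]
  -- conclude
  have hgnn : 0 ≤ g y := mul_nonneg (sq_nonneg _) (Real.sqrt_nonneg _)
  have goal_eq : ((f y) ^ 2 * Real.sqrt (deriv φ y)) ^ 2 = g y ^ 2 := rfl
  rw [goal_eq]
  have main : g y ^ 2 ≤ 8 * A * (B + D) :=
    final_aux (g y) A (B + D) hgnn hA (add_nonneg hB hD) (fun l hl => key l hl)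
  linarith [main]
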